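/- Fix integers d ≥ 2, N ≥ 1, K ≥ 1. Define the matrix V with rows indexed by triples (a',b',b) and columns indexed by a, where a,a' : Fin N → Fin d and b,b' : Fin K → Fin d, by V((a',b',b), a) := sqrt(d_S^N / d_S^{N+K}) · Π_sym^{(N+K)}((a',b'),(a,b)). Then V† V = Π_sym^{(N)}; in particular, V restricts to an isometry from the symmetric subspace of (ℂ^d)^{⊗N} into (ℂ^d)^{⊗N} ⊗ (ℂ^d)^{⊗K} ⊗ (ℂ^d)^{⊗K}. This V is the common Stinespring isometry realising simultaneously the optimal N→K transposition channel and the optimal N→N+K cloning channel. -/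

import Mathlib

open Matrix Kronecker BigOperators ComplexOrder

noncomputable section

/-- The matrix of the permutation `π ∈ S_M` acting on the `M` tensor factors of `(ℂ^d)^{⊗M}`. -/
def permMat (d M : ℕ) (π : Equiv.Perm (Fin M)) :
    Matrix (Fin M → Fin d) (Fin M → Fin d) ℂ :=
  Matrix.of fun x y => if x = y ∘ π.symm then 1 else 0

/-- The orthogonal projector onto the symmetric subspace of `(ℂ^d)^{⊗M}`. -/
def symProj (d M : ℕ) : Matrix (Fin M → Fin d) (Fin M → Fin d) ℂ :=
  ((M.factorial : ℂ))⁻¹ • ∑ π : Equiv.Perm (Fin M), permMat d M π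

/-- The dimension `d_S^M = binom(M+d-1, d-1)` of the symmetric subspace of `(ℂ^d)^{⊗M}`. -/
def dS (d M : ℕ) : ℕ := (M + d - 1).choose (d - 1)

/-- Regard a pair of tuples as a single tuple via `Fin (N+K) ≃ Fin N ⊕ Fin K`. -/
def pairToFun (d N K : ℕ) (x : Fin N → Fin d) (o : Fin K → Fin d) :
    Fin (N + K) → Fin d :=
  fun i => Sum.elim x o (finSumFinEquiv.symm i)

/-- The projector onto the symmetric subspace of `(ℂ^d)^{⊗(N+K)}`, regarded as a matrix
indexed by pairs `((x,o),(x',o'))`. -/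
def symProjNK (d N K : ℕ) :
    Matrix ((Fin N → Fin d) × (Fin K → Fin d)) ((Fin N → Fin d) × (Fin K → Fin d)) ℂ :=
  Matrix.of fun p q =>
    symProj d (N + K) (pairToFun d N K p.1 p.2) (pairToFun d N K q.1 q.2)

/-- Partial trace over the output (second) factor. -/
def trOut {d N K : ℕ}
    (J : Matrix ((Fin N → Fin d) × (Fin K → Fin d)) ((Fin N → Fin d) × (Fin K → Fin d)) ℂ) :
    Matrix (Fin N → Fin d) (Fin N → Fin d) ℂ :=
  Matrix.of fun x x' => ∑ o : Fin K → Fin d, J (x, o) (x', o)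

/-- The Stinespring isometry `V((a',b',b), a) = sqrt(d_S^N/d_S^{N+K}) Π_sym^{(N+K)}((a',b'),(a,b))`
realising simultaneously optimal `N→K` transposition and optimal `N→N+K` cloning. -/
def stIso (d N K : ℕ) :
    Matrix ((Fin N → Fin d) × (Fin K → Fin d) × (Fin K → Fin d)) (Fin N → Fin d) ℂ :=
  Matrix.of fun p a =>
    (Real.sqrt ((dS d N : ℝ) / (dS d (N + K) : ℝ)) : ℂ) *
      symProjNK d N K (p.1, p.2.1) (a, p.2.2)

/- ### Auxiliary combinatorial lemmas -/

open Finset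

set_option linter.unusedSectionVars false

section Counting

variable {α β : Type*} [Fintype α] [Fintype β] [DecidableEq α] [DecidableEq β]

lemma card_equiv_type (A B : Type*) [Fintype A] [Fintype B] [DecidableEq A] [DecidableEq B] :
    Fintype.card (A ≃ B) = if Fintype.card A = Fintype.card B then (Fintype.card B).factorial else 0 := by
  split_ifs with h
  · rw [Fintype.card_equiv (Fintype.equivOfCardEq h), h]
  · have : IsEmpty (A ≃ B) := ⟨fun e => h (Fintype.card_congr e)⟩
    exact Fintype.card_eq_zero

/-- Fiber count of a function. -/
def cnt (f : α → β) (i : β) : ℕ := #(univ.filter fun j => f j = i)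

lemma sum_cnt (f : α → β) : ∑ i, cnt f i = Fintype.card α := by
  rw [Fintype.card, Finset.card_eq_sum_card_fiberwise (f := f) (fun x _ => mem_univ (f x))]
  rfl

/-- Permutations intertwining `f` and `g` correspond to families of fiber bijections. -/
def compEquiv (f g : α → β) :
    {π : Equiv.Perm α // f ∘ π = g} ≃ ∀ i, {x // g x = i} ≃ {x // f x = i} where
  toFun := fun ⟨π, h⟩ i =>
    { toFun := fun x => ⟨π x.1, by rw [show f (π x.1) = g x.1 from congrFun h x.1, x.2]⟩
      invFun := fun y => ⟨π.symm y.1, by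
        have h1 : f (π (π.symm y.1)) = g (π.symm y.1) := congrFun h _
        rw [Equiv.apply_symm_apply] at h1; rw [← h1, y.2]⟩
      left_inv := fun x => by simp
      right_inv := fun y => by simp }
  invFun := fun E => by
    refine ⟨⟨fun x => (E (g x) ⟨x, rfl⟩).1, fun x => ((E (f x)).symm ⟨x, rfl⟩).1, ?_, ?_⟩, ?_⟩
    · intro x
      have key : ∀ (i i' : β) (h : i = i') (z : α) (hz : f z = i) (hz' : f z = i'),
          ((E i).symm ⟨z, hz⟩).1 = ((E i').symm ⟨z, hz'⟩).1 := by
        rintro i i' rfl z hz hz'; rfl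
      have hfu : f ((E (g x) ⟨x, rfl⟩).1) = g x := (E (g x) ⟨x, rfl⟩).2
      dsimp only
      rw [key _ (g x) hfu _ rfl hfu]
      have : (⟨(E (g x) ⟨x, rfl⟩).1, hfu⟩ : {z // f z = g x}) = E (g x) ⟨x, rfl⟩ := rfl
      rw [this, Equiv.symm_apply_apply]
    · intro x
      have key : ∀ (i i' : β) (h : i = i') (z : α) (hz : g z = i) (hz' : g z = i'),
          ((E i) ⟨z, hz⟩).1 = ((E i') ⟨z, hz'⟩).1 := by
        rintro i i' rfl z hz hz'; rfl
      have hfu : g (((E (f x)).symm ⟨x, rfl⟩).1) = f x := ((E (f x)).symm ⟨x, rfl⟩).2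
      dsimp only
      rw [key _ (f x) hfu _ rfl hfu]
      have : (⟨((E (f x)).symm ⟨x, rfl⟩).1, hfu⟩ : {z // g z = f x}) = (E (f x)).symm ⟨x, rfl⟩ := rfl
      rw [this, Equiv.apply_symm_apply]
    · funext x
      exact (E (g x) ⟨x, rfl⟩).2
  left_inv := fun ⟨π, h⟩ => by
    apply Subtype.ext; apply Equiv.ext; intro x; rfl
  right_inv := fun E => by
    funext i; apply Equiv.ext; intro x
    apply Subtype.ext
    show (E (g x.1) ⟨x.1, rfl⟩).1 = (E i x).1
    have key : ∀ (i i' : β) (h : i = i') (z : α) (hz : g z = i) (hz' : g z = i'),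
        ((E i) ⟨z, hz⟩).1 = ((E i') ⟨z, hz'⟩).1 := by
      rintro i i' rfl z hz hz'; rfl
    exact key _ i x.2 x.1 rfl x.2

lemma card_perm_comp (f g : α → β) :
    #(univ.filter fun π : Equiv.Perm α => f ∘ π = g) =
      if ∀ i, cnt f i = cnt g i then ∏ i, (cnt g i).factorial else 0 := by
  rw [← Fintype.card_subtype, Fintype.card_congr (compEquiv f g), Fintype.card_pi]
  have hcard : ∀ (h : α → β) (i : β), Fintype.card {x // h x = i} = cnt h i := by
    intro h i; rw [Fintype.card_subtype]; rfl
  have : ∀ i, Fintype.card ({x // g x = i} ≃ {x // f x = i}) =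
      if cnt g i = cnt f i then (cnt f i).factorial else 0 := by
    intro i; rw [card_equiv_type, hcard, hcard]
  simp_rw [this]
  split_ifs with h
  · exact Finset.prod_congr rfl fun i _ => by rw [if_pos (h i).symm, h i]
  · push_neg at h
    obtain ⟨i, hi⟩ := h
    exact Finset.prod_eq_zero (mem_univ i) (by rw [if_neg (Ne.symm hi)])

lemma cnt_cons {d K : ℕ} (o : Fin d) (b : Fin K → Fin d) (i : Fin d) :
    cnt (Fin.cons o b : Fin (K+1) → Fin d) i = cnt b i + if i = o then 1 else 0 := by
  unfold cnt
  rw [card_filter, card_filter, Fin.sum_univ_succ]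
  simp only [Fin.cons_zero, Fin.cons_succ]
  rw [add_comm]
  congr 1
  by_cases h : i = o
  · simp [h]
  · simp [h]; exact fun hh => h hh.symm

lemma T_formula {d : ℕ} : ∀ (K : ℕ) (m : Fin d → ℕ),
    ∑ b : Fin K → Fin d, ∏ i, (m i + cnt b i).factorial =
      (∏ i, (m i).factorial) * ∏ j ∈ Finset.range K, ((∑ i, m i) + d + j) := by
  intro K
  induction K with
  | zero =>
    intro m
    have h0 : ∀ (b : Fin 0 → Fin d) (i : Fin d), cnt b i = 0 := fun b i => by simp [cnt]
    rw [Finset.range_zero, Finset.prod_empty, mul_one]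
    rw [Fintype.sum_subsingleton _ (fun i => i.elim0)]
    simp [h0]
  | succ K ih =>
    intro m
    rw [← Fintype.sum_equiv (Fin.consEquiv (fun _ => Fin d))
      (fun p => ∏ i, (m i + cnt (Fin.cons p.1 p.2 : Fin (K+1) → Fin d) i).factorial)
      (fun b => ∏ i, (m i + cnt b i).factorial) (fun p => rfl)]
    rw [Fintype.sum_prod_type]
    have step : ∀ (o : Fin d) (b : Fin K → Fin d),
        ∏ i, (m i + cnt (Fin.cons o b : Fin (K+1) → Fin d) i).factorial =
          (m o + cnt b o + 1) * ∏ i, (m i + cnt b i).factorial := by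
      intro o b
      simp_rw [cnt_cons]
      rw [← Finset.mul_prod_erase univ _ (mem_univ o),
        ← Finset.mul_prod_erase univ (fun i => (m i + cnt b i).factorial) (mem_univ o)]
      have he : ∏ x ∈ univ.erase o, (m x + (cnt b x + if x = o then 1 else 0)).factorial
          = ∏ x ∈ univ.erase o, (m x + cnt b x).factorial :=
        Finset.prod_congr rfl fun i hi => by rw [if_neg (mem_erase.mp hi).1, add_zero]
      rw [he, if_pos rfl, show m o + (cnt b o + 1) = (m o + cnt b o) + 1 from by ring,
        Nat.factorial_succ, mul_assoc]
    simp_rw [step]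
    rw [Finset.sum_comm]
    have inner : ∀ b : Fin K → Fin d,
        ∑ o, (m o + cnt b o + 1) * ∏ i, (m i + cnt b i).factorial =
          ((∑ i, m i) + d + K) * ∏ i, (m i + cnt b i).factorial := by
      intro b
      rw [← Finset.sum_mul]
      congr 1
      rw [Finset.sum_add_distrib, Finset.sum_add_distrib, sum_cnt]
      simp [Fintype.card_fin]
      ring
    simp_rw [inner]
    rw [← Finset.mul_sum, ih m, Finset.prod_range_succ]
    ring

end Counting

lemma cnt_pair {d N K : ℕ} (x : Fin N → Fin d) (o : Fin K → Fin d) (i : Fin d) :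
    cnt (pairToFun d N K x o) i = cnt x i + cnt o i := by
  unfold cnt
  rw [card_filter, card_filter, card_filter]
  rw [← Fintype.sum_equiv finSumFinEquiv
    (fun s => if Sum.elim x o s = i then 1 else 0)
    (fun j => if pairToFun d N K x o j = i then 1 else 0)
    (fun s => by simp [pairToFun])]
  rw [Fintype.sum_sum_type]
  rfl

lemma key_count (d N K : ℕ) (a a' : Fin N → Fin d) :
    ∑ b : Fin K → Fin d,
      #(univ.filter fun π : Equiv.Perm (Fin (N+K)) =>
        pairToFun d N K a b ∘ π = pairToFun d N K a' b)
    = #(univ.filter fun σ : Equiv.Perm (Fin N) => a ∘ σ = a')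
        * ∏ j ∈ Finset.range K, (N + d + j) := by
  rw [card_perm_comp a a']
  have hb : ∀ b : Fin K → Fin d,
      #(univ.filter fun π : Equiv.Perm (Fin (N+K)) =>
        pairToFun d N K a b ∘ π = pairToFun d N K a' b)
      = if (∀ i, cnt a i = cnt a' i) then
          ∏ i, (cnt (pairToFun d N K a' b) i).factorial else 0 := by
    intro b
    rw [card_perm_comp]
    have hiff : (∀ i, cnt (pairToFun d N K a b) i = cnt (pairToFun d N K a' b) i)
        ↔ (∀ i, cnt a i = cnt a' i) := by
      simp_rw [cnt_pair]
      exact forall_congr' fun i => by omega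
    simp only [hiff]
  simp_rw [hb]
  split_ifs with h
  · simp_rw [cnt_pair]
    rw [T_formula K (cnt a'), sum_cnt a', Fintype.card_fin]
  · simp

lemma fact_prod_aux (d N : ℕ) (hd : 1 ≤ d) :
    ∀ K, (N + d - 1).factorial * ∏ j ∈ Finset.range K, (N + d + j)
      = (N + K + d - 1).factorial := by
  intro K
  induction K with
  | zero => simp
  | succ K ih =>
    rw [Finset.prod_range_succ, ← mul_assoc, ih]
    have h1 : N + (K+1) + d - 1 = (N + K + d - 1) + 1 := by omega
    have h2 : N + K + d - 1 + 1 = N + d + K := by omega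
    rw [h1, Nat.factorial_succ, h2, mul_comm]

lemma dS_fact (d n : ℕ) (hd : 1 ≤ d) :
    dS d n * (d-1).factorial * n.factorial = (n + d - 1).factorial := by
  have h1 : d - 1 ≤ n + d - 1 := by omega
  have h2 : n + d - 1 - (d - 1) = n := by omega
  have := Nat.choose_mul_factorial_mul_factorial h1
  rw [h2] at this
  exact this

lemma key_fact (d N K : ℕ) (hd : 1 ≤ d) :
    dS d N * N.factorial * ∏ j ∈ Finset.range K, (N + d + j)
      = dS d (N + K) * (N + K).factorial := by
  apply Nat.eq_of_mul_eq_mul_right (Nat.factorial_pos (d-1))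
  calc dS d N * N.factorial * (∏ j ∈ Finset.range K, (N + d + j)) * (d-1).factorial
      = (dS d N * (d-1).factorial * N.factorial) * ∏ j ∈ Finset.range K, (N + d + j) := by ring
    _ = (N + d - 1).factorial * ∏ j ∈ Finset.range K, (N + d + j) := by rw [dS_fact d N hd]
    _ = (N + K + d - 1).factorial := fact_prod_aux d N hd K
    _ = dS d (N+K) * (d-1).factorial * (N+K).factorial := (dS_fact d (N+K) hd).symm
    _ = dS d (N + K) * (N + K).factorial * (d-1).factorial := by ring

/- ### Matrix lemmas about `symProj` -/

lemma symProj_apply (d M : ℕ) (x y : Fin M → Fin d) :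
    symProj d M x y = ((M.factorial : ℂ))⁻¹ *
      ∑ π : Equiv.Perm (Fin M), if x = y ∘ π.symm then (1:ℂ) else 0 := by
  simp [symProj, permMat, Matrix.sum_apply]

lemma symProj_apply_card (d M : ℕ) (x y : Fin M → Fin d) :
    symProj d M x y = ((M.factorial : ℂ))⁻¹ *
      ((#(univ.filter fun π : Equiv.Perm (Fin M) => x ∘ π = y) : ℕ) : ℂ) := by
  rw [symProj_apply, card_filter]
  push_cast
  congr 1
  exact Finset.sum_congr rfl fun π _ => if_congr (Equiv.eq_comp_symm π x y) rfl rfl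

lemma permMat_mul (d M : ℕ) (π σ : Equiv.Perm (Fin M)) :
    permMat d M π * permMat d M σ = permMat d M (π * σ) := by
  ext x z
  rw [Matrix.mul_apply]
  simp only [permMat, Matrix.of_apply]
  have h0 : ∀ y, (if x = y ∘ π.symm then (1:ℂ) else 0) * (if y = z ∘ σ.symm then (1:ℂ) else 0)
      = if y = z ∘ σ.symm then (if x = y ∘ π.symm then (1:ℂ) else 0) else 0 := by
    intro y; by_cases h : y = z ∘ σ.symm <;> simp [h]
  simp_rw [h0]
  rw [Finset.sum_ite_eq' univ (z ∘ σ.symm) (fun y => if x = y ∘ ⇑π.symm then (1:ℂ) else 0)]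
  rw [if_pos (mem_univ _)]
  have hc : (z ∘ ⇑σ.symm) ∘ ⇑π.symm = z ∘ ⇑(π * σ).symm := by
    funext j; simp [Equiv.Perm.mul_def, Equiv.symm_trans_apply]
  rw [hc]

lemma symProj_sq (d M : ℕ) : symProj d M * symProj d M = symProj d M := by
  unfold symProj
  rw [Matrix.smul_mul, Matrix.mul_smul, smul_smul, Finset.sum_mul]
  have h1 : ∀ π : Equiv.Perm (Fin M),
      permMat d M π * (∑ σ : Equiv.Perm (Fin M), permMat d M σ)
        = ∑ σ : Equiv.Perm (Fin M), permMat d M σ := by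
    intro π
    rw [Finset.mul_sum]
    simp_rw [permMat_mul]
    exact Fintype.sum_equiv (Equiv.mulLeft π) _ _ (fun σ => rfl)
  simp_rw [h1]
  rw [Finset.sum_const, Finset.card_univ, Fintype.card_perm, Fintype.card_fin]
  rw [← Nat.cast_smul_eq_nsmul ℂ, smul_smul]
  congr 1
  have : (M.factorial : ℂ) ≠ 0 := Nat.cast_ne_zero.mpr (Nat.factorial_ne_zero M)
  field_simp

lemma symProj_symm (d M : ℕ) (x y : Fin M → Fin d) :
    symProj d M x y = symProj d M y x := by
  rw [symProj_apply, symProj_apply]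
  congr 1
  refine Fintype.sum_equiv (Equiv.inv (Equiv.Perm (Fin M))) _ _ fun π => ?_
  simp only [Equiv.inv_apply]
  have h : (x = y ∘ ⇑π.symm) ↔ (y = x ∘ ⇑(π⁻¹).symm) := by
    show _ ↔ y = x ∘ ⇑(π.symm.symm)
    rw [Equiv.symm_symm]
    constructor <;> intro h <;> rw [h] <;> funext j <;> simp
  exact if_congr h rfl rfl

lemma symProj_star (d M : ℕ) (x y : Fin M → Fin d) :
    star (symProj d M x y) = symProj d M y x := by
  rw [symProj_symm d M x y, symProj_apply_card d M y x]
  simp [star_mul', star_natCast, star_inv₀]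

/-- The equivalence between pairs of tuples and single tuples of length `N+K`. -/
def pairEquiv (d N K : ℕ) : (Fin N → Fin d) × (Fin K → Fin d) ≃ (Fin (N+K) → Fin d) :=
  (Equiv.sumArrowEquivProdArrow _ _ _).symm.trans
    (Equiv.arrowCongr finSumFinEquiv (Equiv.refl _))

lemma pairEquiv_apply (d N K : ℕ) (p : (Fin N → Fin d) × (Fin K → Fin d)) :
    pairEquiv d N K p = pairToFun d N K p.1 p.2 := by
  funext i
  rfl

lemma symProjNK_sq (d N K : ℕ) : symProjNK d N K * symProjNK d N K = symProjNK d N K := by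
  ext p q
  rw [Matrix.mul_apply]
  have h1 : ∀ r : (Fin N → Fin d) × (Fin K → Fin d),
      symProjNK d N K p r * symProjNK d N K r q
        = symProj d (N+K) (pairToFun d N K p.1 p.2) (pairEquiv d N K r)
            * symProj d (N+K) (pairEquiv d N K r) (pairToFun d N K q.1 q.2) := by
    intro r; rw [pairEquiv_apply]; rfl
  simp_rw [h1]
  rw [Fintype.sum_equiv (pairEquiv d N K)
    (fun r => symProj d (N+K) (pairToFun d N K p.1 p.2) (pairEquiv d N K r)
      * symProj d (N+K) (pairEquiv d N K r) (pairToFun d N K q.1 q.2))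
    (fun w => symProj d (N+K) (pairToFun d N K p.1 p.2) w
      * symProj d (N+K) w (pairToFun d N K q.1 q.2)) (fun r => rfl)]
  rw [← Matrix.mul_apply, symProj_sq]
  rfl

/-- `V† V = Π_sym^{(N)}`: the Stinespring dilation `V` is an isometry on the symmetric
subspace of `(ℂ^d)^{⊗N}`. -/
theorem stmt4 (d N K : ℕ) (hd : 2 ≤ d) (hN : 1 ≤ N) (hK : 1 ≤ K) :
    (stIso d N K)ᴴ * stIso d N K = symProj d N := by
  have hd1 : 1 ≤ d := le_trans one_le_two hd
  set c : ℝ := Real.sqrt ((dS d N : ℝ) / (dS d (N + K) : ℝ)) with hc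
  have hdSNK : (0:ℕ) < dS d (N+K) := Nat.choose_pos (by omega)
  have hdSNKC : ((dS d (N+K) : ℂ)) ≠ 0 := Nat.cast_ne_zero.mpr hdSNK.ne'
  have hNf : ((N.factorial : ℂ)) ≠ 0 := Nat.cast_ne_zero.mpr (Nat.factorial_ne_zero N)
  have hNKf : (((N+K).factorial : ℂ)) ≠ 0 := Nat.cast_ne_zero.mpr (Nat.factorial_ne_zero (N+K))
  -- the square of the scalar
  have hcc : (c : ℂ) * (c : ℂ) = (dS d N : ℂ) / (dS d (N+K) : ℂ) := by
    rw [← Complex.ofReal_mul, Real.mul_self_sqrt (div_nonneg (Nat.cast_nonneg _) (Nat.cast_nonneg _))]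
    push_cast
    ring
  ext a a'
  rw [Matrix.mul_apply]
  simp only [Matrix.conjTranspose_apply, stIso, Matrix.of_apply]
  have hterm : ∀ p : (Fin N → Fin d) × (Fin K → Fin d) × (Fin K → Fin d),
      star ((c:ℂ) * symProjNK d N K (p.1, p.2.1) (a, p.2.2))
          * ((c:ℂ) * symProjNK d N K (p.1, p.2.1) (a', p.2.2))
        = ((c:ℂ) * (c:ℂ)) * (symProjNK d N K (a, p.2.2) (p.1, p.2.1)
            * symProjNK d N K (p.1, p.2.1) (a', p.2.2)) := by
    intro p
    have hst : star (symProjNK d N K (p.1, p.2.1) (a, p.2.2))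
        = symProjNK d N K (a, p.2.2) (p.1, p.2.1) := symProj_star d (N+K) _ _
    rw [star_mul', hst, Complex.star_def, Complex.conj_ofReal]
    ring
  rw [Finset.sum_congr rfl fun p _ => hterm p]
  rw [← Finset.mul_sum]
  -- reorganize the sum
  have hsum : (∑ p : (Fin N → Fin d) × (Fin K → Fin d) × (Fin K → Fin d),
      symProjNK d N K (a, p.2.2) (p.1, p.2.1) * symProjNK d N K (p.1, p.2.1) (a', p.2.2))
      = ∑ b : Fin K → Fin d, symProjNK d N K (a, b) (a', b) := by
    rw [Fintype.sum_prod_type]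
    have h2 : ∀ x : Fin N → Fin d, (∑ q : (Fin K → Fin d) × (Fin K → Fin d),
        symProjNK d N K (a, q.2) (x, q.1) * symProjNK d N K (x, q.1) (a', q.2))
        = ∑ b : Fin K → Fin d, ∑ b' : Fin K → Fin d,
            symProjNK d N K (a, b) (x, b') * symProjNK d N K (x, b') (a', b) := by
      intro x
      rw [Fintype.sum_prod_type, Finset.sum_comm]
    simp_rw [h2]
    rw [Finset.sum_comm]
    refine Finset.sum_congr rfl fun b _ => ?_
    have hmul : symProjNK d N K (a, b) (a', b)
        = ∑ r : (Fin N → Fin d) × (Fin K → Fin d),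
            symProjNK d N K (a, b) r * symProjNK d N K r (a', b) := by
      rw [← Matrix.mul_apply, symProjNK_sq]
    rw [hmul, Fintype.sum_prod_type]
  rw [hsum]
  -- express via counting
  have hPib : ∀ b : Fin K → Fin d, symProjNK d N K (a, b) (a', b)
      = (((N+K).factorial : ℂ))⁻¹ *
        ((#(univ.filter fun π : Equiv.Perm (Fin (N+K)) =>
          pairToFun d N K a b ∘ π = pairToFun d N K a' b) : ℕ) : ℂ) := by
    intro b
    exact symProj_apply_card d (N+K) _ _
  simp_rw [hPib]
  rw [← Finset.mul_sum, ← Nat.cast_sum, key_count d N K a a']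
  rw [symProj_apply_card d N a a', hcc]
  have hkeyC : (dS d N : ℂ) * (N.factorial : ℂ) * ((∏ j ∈ Finset.range K, (N + d + j) : ℕ) : ℂ)
      = (dS d (N+K) : ℂ) * (((N+K).factorial : ℂ)) := by
    exact_mod_cast congrArg (Nat.cast : ℕ → ℂ) (key_fact d N K hd1)
  push_cast
  push_cast at hkeyC
  field_simp
  linear_combination ((#(univ.filter fun σ : Equiv.Perm (Fin N) => a ∘ σ = a') : ℕ) : ℂ) * hkeyC

end
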